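/- Let M be a smooth manifold with a C¹ diffeomorphism φ: M → M and a compact φ-invariant set K. Suppose at each x ∈ K there are subspaces E_u(x), E_s(x) ⊂ T_xM with T_xM = E_u(x) ⊕ E_s(x), dφ(x)E_s(x) = E_s(φ(x)), dφ(x)E_u(x) = E_u(φ(x)), and constants C > 0, 0 < λ < 1 with |dφ^n(x)v| ≤ Cλⁿ|v| for v ∈ E_s(x) and |dφ^{-n}(x)v| ≤ Cλⁿ|v| for v ∈ E_u(x), for all n ≥ 0 (with respect to a fixed Riemannian metric). Then E_s: K → Grassmannian is continuous: if x_k → x in K, v_k ∈ E_s(x_k), |v_k| = 1, and v_k → v ∈ T_xM, then v ∈ E_s(x). -/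

import Mathlib

open Set Filter

private lemma contDiff_iter {E : Type*} [NormedAddCommGroup E] [NormedSpace ℝ E]
    {φ : E → E} (hφ : ContDiff ℝ 1 φ) : ∀ n : ℕ, ContDiff ℝ 1 (φ^[n]) := by
  intro n
  induction n with
  | zero => simpa using contDiff_id
  | succ n ih => rw [Function.iterate_succ']; exact hφ.comp ih

private lemma iter_mem {E : Type*} {φ : E → E} {K : Set E} (hKinv : φ '' K = K) :
    ∀ n : ℕ, ∀ x ∈ K, φ^[n] x ∈ K := by
  intro n
  induction n with
  | zero => intro x hx; simpa using hx
  | succ n ih =>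
    intro x hx
    rw [Function.iterate_succ_apply']
    exact hKinv ▸ Set.mem_image_of_mem φ (ih x hx)

private lemma fderiv_iter_mem {E : Type*} [NormedAddCommGroup E] [NormedSpace ℝ E]
    {φ : E → E} (hφ : ContDiff ℝ 1 φ) {K : Set E} (hKinv : φ '' K = K)
    (Eu : E → Submodule ℝ E)
    (hmapu : ∀ x ∈ K, (Eu x).map (fderiv ℝ φ x : E →ₗ[ℝ] E) = Eu (φ x)) :
    ∀ n : ℕ, ∀ x ∈ K, ∀ u ∈ Eu x, fderiv ℝ (φ^[n]) x u ∈ Eu (φ^[n] x) := by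
  intro n
  induction n with
  | zero => intro x hx u hu; simpa using hu
  | succ n ih =>
    intro x hx u hu
    have hd1 : DifferentiableAt ℝ φ (φ^[n] x) := hφ.differentiable one_ne_zero _
    have hd2 : DifferentiableAt ℝ (φ^[n]) x := (contDiff_iter hφ n).differentiable one_ne_zero _
    have hcomp : fderiv ℝ (φ^[n+1]) x =
        (fderiv ℝ φ (φ^[n] x)).comp (fderiv ℝ (φ^[n]) x) := by
      rw [Function.iterate_succ']
      exact fderiv_comp x hd1 hd2
    rw [Function.iterate_succ_apply', hcomp]
    have h1 : fderiv ℝ (φ^[n]) x u ∈ Eu (φ^[n] x) := ih x hx u hu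
    have := hmapu (φ^[n] x) (iter_mem hKinv n x hx)
    rw [← this]
    exact Submodule.mem_map_of_mem h1

theorem stmt8 {E : Type*} [NormedAddCommGroup E] [NormedSpace ℝ E] [FiniteDimensional ℝ E]
    (φ ψ : E → E) (hφ : ContDiff ℝ 1 φ) (hψ : ContDiff ℝ 1 ψ)
    (hlinv : Function.LeftInverse ψ φ) (hrinv : Function.RightInverse ψ φ)
    (K : Set E) (hK : IsCompact K) (hKinv : φ '' K = K)
    (Eu Es : E → Submodule ℝ E)
    (hsplit : ∀ x ∈ K, IsCompl (Eu x) (Es x))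
    (hmapu : ∀ x ∈ K, (Eu x).map (fderiv ℝ φ x : E →ₗ[ℝ] E) = Eu (φ x))
    (hmaps : ∀ x ∈ K, (Es x).map (fderiv ℝ φ x : E →ₗ[ℝ] E) = Es (φ x))
    (C lam : ℝ) (hC : 0 < C) (hlam0 : 0 < lam) (hlam1 : lam < 1)
    (hs : ∀ n : ℕ, ∀ x ∈ K, ∀ v ∈ Es x, ‖fderiv ℝ (φ^[n]) x v‖ ≤ C * lam ^ n * ‖v‖)
    (hu : ∀ n : ℕ, ∀ x ∈ K, ∀ v ∈ Eu x, ‖fderiv ℝ (ψ^[n]) x v‖ ≤ C * lam ^ n * ‖v‖)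
    (x : E) (hx : x ∈ K) (xs : ℕ → E) (hxs : ∀ k, xs k ∈ K)
    (hxlim : Tendsto xs atTop (nhds x))
    (vs : ℕ → E) (hvs : ∀ k, vs k ∈ Es (xs k)) (hvnorm : ∀ k, ‖vs k‖ = 1)
    (v : E) (hvlim : Tendsto vs atTop (nhds v)) :
    v ∈ Es x := by
  -- Step 1: the limit vector satisfies the stable estimate at x.
  have key : ∀ n : ℕ, ‖fderiv ℝ (φ^[n]) x v‖ ≤ C * lam ^ n := by
    intro n
    have hφn : ContDiff ℝ 1 (φ^[n]) := contDiff_iter hφ n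
    have hder : Continuous (fderiv ℝ (φ^[n])) := hφn.continuous_fderiv one_ne_zero
    have hcont : Tendsto (fun k => fderiv ℝ (φ^[n]) (xs k) (vs k)) atTop
        (nhds (fderiv ℝ (φ^[n]) x v)) :=
      (isBoundedBilinearMap_apply.continuous.tendsto (fderiv ℝ (φ^[n]) x, v)).comp
        (((hder.tendsto x).comp hxlim).prodMk_nhds hvlim)
    have hbd : ∀ k, ‖fderiv ℝ (φ^[n]) (xs k) (vs k)‖ ≤ C * lam ^ n := by
      intro k
      have := hs n (xs k) (hxs k) (vs k) (hvs k)
      rwa [hvnorm k, mul_one] at this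
    exact le_of_tendsto (hcont.norm) (Filter.Eventually.of_forall hbd)
  -- Decompose v = u + s with u ∈ Eu x, s ∈ Es x
  have hv_mem : v ∈ (Eu x ⊔ Es x : Submodule ℝ E) := by
    rw [(hsplit x hx).sup_eq_top]; trivial
  obtain ⟨u, hu_mem, s, hs_mem, huv⟩ := Submodule.mem_sup.mp hv_mem
  -- Key estimate: ‖u‖ ≤ C λⁿ ‖dφⁿ x u‖ for all n, via ψⁿ.
  have hexp : ∀ n : ℕ, ‖u‖ ≤ C * lam ^ n * ‖fderiv ℝ (φ^[n]) x u‖ := by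
    intro n
    set y := φ^[n] x with hy
    have hyK : y ∈ K := iter_mem hKinv n x hx
    set w := fderiv ℝ (φ^[n]) x u with hw
    have hwEu : w ∈ Eu y := fderiv_iter_mem hφ hKinv Eu hmapu n x hx u hu_mem
    -- fderiv ψⁿ at y applied to w equals u
    have hid : ψ^[n] ∘ φ^[n] = id := (hlinv.iterate n).comp_eq_id
    have hd1 : DifferentiableAt ℝ (ψ^[n]) y := (contDiff_iter hψ n).differentiable one_ne_zero _
    have hd2 : DifferentiableAt ℝ (φ^[n]) x := (contDiff_iter hφ n).differentiable one_ne_zero _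
    have hcomp : (fderiv ℝ (ψ^[n]) y).comp (fderiv ℝ (φ^[n]) x) = ContinuousLinearMap.id ℝ E := by
      rw [← fderiv_comp x hd1 hd2, hid, fderiv_id]
    have hinv : fderiv ℝ (ψ^[n]) y w = u := by
      have := congrArg (fun L => L u) hcomp
      simpa using this
    calc ‖u‖ = ‖fderiv ℝ (ψ^[n]) y w‖ := by rw [hinv]
      _ ≤ C * lam ^ n * ‖w‖ := hu n y hyK w hwEu
  -- dφⁿ x u = dφⁿ x v - dφⁿ x s
  have hnorm_u : ∀ n : ℕ, ‖u‖ ≤ C * lam ^ n * (C * lam ^ n + C * lam ^ n * ‖s‖) := by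
    intro n
    refine (hexp n).trans (mul_le_mul_of_nonneg_left ?_ (by positivity))
    have heq : fderiv ℝ (φ^[n]) x u = fderiv ℝ (φ^[n]) x v - fderiv ℝ (φ^[n]) x s := by
      rw [← huv, map_add]; abel
    rw [heq]
    calc ‖fderiv ℝ (φ^[n]) x v - fderiv ℝ (φ^[n]) x s‖
        ≤ ‖fderiv ℝ (φ^[n]) x v‖ + ‖fderiv ℝ (φ^[n]) x s‖ := norm_sub_le _ _
      _ ≤ C * lam ^ n + C * lam ^ n * ‖s‖ := add_le_add (key n) (hs n x hx s hs_mem)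
  -- The right-hand side tends to 0
  have htend : Tendsto (fun n : ℕ => C * lam ^ n * (C * lam ^ n + C * lam ^ n * ‖s‖))
      atTop (nhds 0) := by
    have hl : Tendsto (fun n : ℕ => lam ^ n) atTop (nhds 0) :=
      tendsto_pow_atTop_nhds_zero_of_lt_one hlam0.le hlam1
    have : Tendsto (fun n : ℕ => C * lam ^ n * (C * lam ^ n + C * lam ^ n * ‖s‖))
        atTop (nhds (C * 0 * (C * 0 + C * 0 * ‖s‖))) := by
      exact ((hl.const_mul C).mul (((hl.const_mul C)).add ((hl.const_mul C).mul_const ‖s‖)))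
    simpa using this
  have hu0 : ‖u‖ ≤ 0 := ge_of_tendsto' htend hnorm_u
  have : u = 0 := norm_le_zero_iff.mp hu0
  rw [← huv, this, zero_add]
  exact hs_mem
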